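/- For every non-negative even integer t and every τ in the complex upper half-plane ℍ, one has ℱ_t(q) = −(1/2)·D_ω^t[ Σ_{n∈ℤ} (−1)^n·e^{2πiω}·q^{4n²+8n+3}/(1 − e^{4πiω}·q^{8n+4}) ]|_{ω=0}, where the bilateral series is holomorphic in ω in a neighborhood of ω = 0 and D_ω^t denotes the t-fold application of the operator (1/2πi)·d/dω, evaluated at ω = 0. -/

import Mathlib

noncomputable section
open Complex Real

/-- `q = e^{2πiτ}`. -/
def nome (τ : ℂ) : ℂ := Complex.exp (2 * (π : ℂ) * I * τ)

/-- `ℱ_t(x) = Σ_{β≥0} Σ_{α≥β+1} (−1)^{α+β} (2β+1)^t x^{4α²−(2β+1)²}`, with `α = β+1+j`. -/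
def Fser (t : ℕ) (x : ℂ) : ℂ :=
  ∑' (β : ℕ) (j : ℕ), (-1 : ℂ) ^ (β + 1 + j + β) * (2 * (β : ℂ) + 1) ^ t *
    x ^ (4 * (β + 1 + j) ^ 2 - (2 * β + 1) ^ 2)

/-- The bilateral series `ω ↦ Σ_{n∈ℤ} (−1)ⁿ e^{2πiω} q^{4n²+8n+3} / (1 − e^{4πiω} q^{8n+4})`. -/
def bilat (τ ω : ℂ) : ℂ :=
  ∑' n : ℤ, (-1 : ℂ) ^ n * Complex.exp (2 * (π : ℂ) * I * ω) *
      nome τ ^ (4 * n ^ 2 + 8 * n + 3 : ℤ) /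
    (1 - Complex.exp (4 * (π : ℂ) * I * ω) * nome τ ^ (8 * n + 4 : ℤ))

open Metric

namespace Aux


/-- exponent -/
def Eex (n k : ℕ) : ℕ := (2*n+1) * (2*n+3+4*k)

def sg : Bool → ℂ := fun s => if s then 1 else -1

def cf (j : Bool × ℕ × ℕ) : ℂ := sg j.1 * (2 * (π:ℂ) * I) * (2*(j.2.2:ℂ)+1)

def g (τ : ℂ) (t : ℕ) (j : Bool × ℕ × ℕ) (ω : ℂ) : ℂ :=
  (-1)^j.2.1 * nome τ ^ Eex j.2.1 j.2.2 * cf j ^ t * Complex.exp (cf j * ω)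

def G (τ : ℂ) (t : ℕ) (ω : ℂ) : ℂ := ∑' j, g τ t j ω

def ub (τ : ℂ) (t : ℕ) (j : Bool × ℕ × ℕ) : ℝ :=
  ‖nome τ‖ ^ Eex j.2.1 j.2.2 * (2*π*(2*(j.2.2:ℝ)+1))^t *
    Real.exp (2*π*(2*(j.2.2:ℝ)+1)*τ.im)

theorem nome_ne (τ : ℂ) : nome τ ≠ 0 := Complex.exp_ne_zero _

theorem norm_nome (τ : ℂ) : ‖nome τ‖ = Real.exp (-(2*π*τ.im)) := by
  rw [nome, Complex.norm_exp]
  congr 1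
  simp [Complex.mul_re, Complex.mul_im]

theorem norm_nome_lt_one {τ : ℂ} (hτ : 0 < τ.im) : ‖nome τ‖ < 1 := by
  rw [norm_nome, Real.exp_lt_one_iff]
  have := Real.pi_pos
  nlinarith

theorem norm_cf (j : Bool × ℕ × ℕ) : ‖cf j‖ = 2*π*(2*(j.2.2:ℝ)+1) := by
  have h1 : ‖sg j.1‖ = 1 := by cases j.1 <;> simp [sg]
  have hπ := Real.pi_pos
  rw [cf, norm_mul, norm_mul, h1, one_mul]
  rw [norm_mul, norm_mul, Complex.norm_I,
    Complex.norm_two, Complex.norm_real, Real.norm_eq_abs]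
  have : ‖(2*(j.2.2:ℂ)+1)‖ = 2*(j.2.2:ℝ)+1 := by
    have : (2*(j.2.2:ℂ)+1) = ((2*(j.2.2:ℝ)+1 : ℝ) : ℂ) := by push_cast; ring
    rw [this, Complex.norm_real, Real.norm_eq_abs]
    exact _root_.abs_of_nonneg (by positivity)
  rw [this, abs_of_pos hπ]
  ring

theorem g_bound {τ : ℂ} (t : ℕ) (j : Bool × ℕ × ℕ) {ω : ℂ} (hω : ‖ω‖ ≤ τ.im) :
    ‖g τ t j ω‖ ≤ ub τ t j := by
  have hπ := Real.pi_pos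
  have hk : (0:ℝ) ≤ 2*π*(2*(j.2.2:ℝ)+1) := by positivity
  have h1 : ‖(-1:ℂ)^j.2.1‖ = 1 := by simp
  rw [g, ub, norm_mul, norm_mul, norm_mul, h1, one_mul, norm_pow, norm_pow, norm_cf]
  have hb : ‖Complex.exp (cf j * ω)‖ ≤ Real.exp (2*π*(2*(j.2.2:ℝ)+1)*τ.im) := by
    rw [Complex.norm_exp, Real.exp_le_exp]
    calc (cf j * ω).re ≤ ‖cf j * ω‖ := Complex.re_le_norm _
      _ = (2*π*(2*(j.2.2:ℝ)+1)) * ‖ω‖ := by rw [norm_mul, norm_cf]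
      _ ≤ (2*π*(2*(j.2.2:ℝ)+1)) * τ.im := by gcongr
  gcongr


theorem summable_aux (t : ℕ) {ρ : ℝ} (h0 : 0 < ρ) (h1 : ρ < 1) :
    Summable (fun k : ℕ => (2*π*(2*(k:ℝ)+1))^t * ρ^k) := by
  have hρ : ‖ρ‖ < 1 := by rwa [Real.norm_eq_abs, _root_.abs_of_nonneg h0.le]
  have base := summable_pow_mul_geometric_of_norm_lt_one (R := ℝ) t hρ
  have base' : Summable (fun k : ℕ => ((k:ℝ)+1)^t * ρ^(k+1)) := by
    have h2 := base.comp_injective (Nat.succ_injective)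
    apply h2.congr
    intro k
    simp [Function.comp, Nat.succ_eq_add_one]
  have base'' : Summable (fun k : ℕ => ((k:ℝ)+1)^t * ρ^k) := by
    have h3 := base'.mul_left ρ⁻¹
    apply h3.congr
    intro k
    field_simp
    ring
  apply (base''.mul_left ((4*π)^t)).of_nonneg_of_le (fun k => by positivity)
  intro k
  have hπ := Real.pi_pos
  have h4 : (2*π*(2*(k:ℝ)+1))^t ≤ ((4*π)^t) * ((k:ℝ)+1)^t := by
    rw [← mul_pow]
    apply pow_le_pow_left₀ (by positivity)
    nlinarith [Nat.cast_nonneg (α := ℝ) k]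
  calc (2*π*(2*(k:ℝ)+1))^t * ρ^k ≤ ((4*π)^t * ((k:ℝ)+1)^t) * ρ^k := by gcongr
    _ = (4*π)^t * (((k:ℝ)+1)^t * ρ^k) := by ring

theorem ub_summable {τ : ℂ} (hτ : 0 < τ.im) (t : ℕ) : Summable (ub τ t) := by
  have hπ := Real.pi_pos
  set y := τ.im with hy
  set a := ‖nome τ‖ with haa
  have ha : a = Real.exp (-(2*π*y)) := norm_nome τ
  have ha0 : 0 < a := by rw [ha]; exact Real.exp_pos _
  have ha1 : a < 1 := by rw [ha, Real.exp_lt_one_iff]; nlinarith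
  set v : ℕ → ℝ := fun k => a^(4*k+3) * ((2*π*(2*(k:ℝ)+1))^t * Real.exp (2*π*(2*(k:ℝ)+1)*y))
    with hv
  have hvsum : Summable v := by
    have hρ0 : (0:ℝ) < a^4 * Real.exp (4*π*y) := by positivity
    have hρ1 : a^4 * Real.exp (4*π*y) < 1 := by
      rw [ha, ← Real.exp_nat_mul, ← Real.exp_add, Real.exp_lt_one_iff]
      push_cast
      nlinarith
    have := ((summable_aux t hρ0 hρ1).mul_left (a^3 * Real.exp (2*π*y)))
    apply this.congr
    intro k
    simp only [hv, ha, mul_pow, ← Real.exp_nat_mul, ← Real.exp_add, ← Real.exp_sum]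
    have key : ∀ (A B A' B' C : ℝ), A + B = A' + B' →
        Real.exp A * (C * Real.exp B) = Real.exp A' * (C * Real.exp B') := by
      intro A B A' B' C h
      rw [mul_left_comm, mul_left_comm (Real.exp A'), ← Real.exp_add, ← Real.exp_add, h]
    apply key
    push_cast
    ring
  set w : ℕ × ℕ → ℝ := fun p =>
    a ^ Eex p.1 p.2 * (2*π*(2*(p.2:ℝ)+1))^t * Real.exp (2*π*(2*(p.2:ℝ)+1)*y) with hw
  have hwsum : Summable w := by
    have hW : Summable (fun p : ℕ × ℕ => a^p.1 * v p.2) := by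
      apply Summable.mul_of_nonneg (summable_geometric_of_lt_one ha0.le ha1) hvsum
        (fun n => by positivity) (fun k => by rw [hv]; positivity)
    apply hW.of_nonneg_of_le (fun p => by rw [hw]; positivity)
    intro p
    rw [hw, hv]
    have hle : p.1 + (4*p.2+3) ≤ Eex p.1 p.2 := by
      rw [Eex]; nlinarith [p.1.zero_le, p.2.zero_le]
    have : a ^ Eex p.1 p.2 ≤ a ^ p.1 * a ^ (4*p.2+3) := by
      rw [← pow_add]
      exact pow_le_pow_of_le_one ha0.le ha1.le hle
    calc a ^ Eex p.1 p.2 * (2*π*(2*(p.2:ℝ)+1))^t * Real.exp (2*π*(2*(p.2:ℝ)+1)*y)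
        ≤ (a ^ p.1 * a ^ (4*p.2+3)) * (2*π*(2*(p.2:ℝ)+1))^t *
          Real.exp (2*π*(2*(p.2:ℝ)+1)*y) := by gcongr <;> positivity
      _ = a^p.1 * (a^(4*p.2+3) * ((2*π*(2*(p.2:ℝ)+1))^t *
          Real.exp (2*π*(2*(p.2:ℝ)+1)*y))) := by ring
  have hub : ub τ t = fun j => w j.2 := by
    funext j
    rw [ub, hw]
  rw [hub]
  apply (summable_prod_of_nonneg (fun j => by simp only [hw]; positivity)).mpr
  exact ⟨fun b => hwsum, Summable.of_finite⟩

theorem norm_le_of_ball {τ : ℂ} {ω : ℂ} (hω : ω ∈ ball (0:ℂ) τ.im) : ‖ω‖ ≤ τ.im := by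
  rw [mem_ball, dist_zero_right] at hω
  exact hω.le

theorem g_summable {τ : ℂ} (hτ : 0 < τ.im) (t : ℕ) {ω : ℂ} (hω : ω ∈ ball (0:ℂ) τ.im) :
    Summable (fun j => g τ t j ω) :=
  (ub_summable hτ t).of_norm_bounded (fun j => g_bound t j (norm_le_of_ball hω))

theorem g_hasDerivAt (τ : ℂ) (t : ℕ) (j : Bool × ℕ × ℕ) (ω : ℂ) :
    HasDerivAt (g τ t j) (g τ (t+1) j ω) ω := by
  have h1 : HasDerivAt (fun ω : ℂ => cf j * ω) (cf j) ω := by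
    simpa using (hasDerivAt_id ω).const_mul (cf j)
  have h2 := h1.cexp
  have h3 := h2.const_mul ((-1:ℂ)^j.2.1 * nome τ ^ Eex j.2.1 j.2.2 * cf j ^ t)
  refine h3.congr_deriv ?_
  rw [g, pow_succ]
  ring

theorem G_hasDerivAt {τ : ℂ} (hτ : 0 < τ.im) (t : ℕ) {ω : ℂ}
    (hω : ω ∈ ball (0:ℂ) τ.im) : HasDerivAt (G τ t) (G τ (t+1) ω) ω := by
  apply hasDerivAt_tsum_of_isPreconnected (ub_summable hτ (t+1)) isOpen_ball
    (convex_ball _ _).isPreconnected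
    (fun j z _ => g_hasDerivAt τ t j z)
    (fun j z hz => g_bound (t+1) j (norm_le_of_ball hz))
    (mem_ball_self hτ)
    (g_summable hτ t (mem_ball_self hτ))
    hω

theorem iteratedDeriv_G {τ : ℂ} (hτ : 0 < τ.im) (t : ℕ) {ω : ℂ}
    (hω : ω ∈ ball (0:ℂ) τ.im) : iteratedDeriv t (G τ 0) ω = G τ t ω := by
  induction t generalizing ω with
  | zero => simp [iteratedDeriv_zero]
  | succ t ih =>
    rw [iteratedDeriv_succ]
    have hev : iteratedDeriv t (G τ 0) =ᶠ[nhds ω] G τ t :=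
      Filter.eventuallyEq_of_mem (isOpen_ball.mem_nhds hω) (fun z hz => ih hz)
    rw [hev.deriv_eq]
    exact (G_hasDerivAt hτ t hω).deriv

theorem G_analyticAt {τ : ℂ} (hτ : 0 < τ.im) : AnalyticAt ℂ (G τ 0) 0 := by
  have hd : DifferentiableOn ℂ (G τ 0) (ball (0:ℂ) τ.im) := fun z hz =>
    (G_hasDerivAt hτ 0 hz).differentiableAt.differentiableWithinAt
  exact hd.analyticAt (isOpen_ball.mem_nhds (mem_ball_self hτ))

theorem eventuallyEq_iteratedDeriv {f g : ℂ → ℂ} {x : ℂ} (h : f =ᶠ[nhds x] g) (t : ℕ) :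
    iteratedDeriv t f =ᶠ[nhds x] iteratedDeriv t g := by
  induction t with
  | zero => simpa [iteratedDeriv_zero] using h
  | succ t ih => simpa only [iteratedDeriv_succ] using ih.deriv


theorem norm_exp_le (w : ℂ) : ‖Complex.exp w‖ ≤ Real.exp ‖w‖ := by
  rw [Complex.norm_exp, Real.exp_le_exp]
  exact Complex.re_le_norm w

theorem norm_exp_ge (w : ℂ) : Real.exp (-‖w‖) ≤ ‖Complex.exp w‖ := by
  rw [show ‖Complex.exp w‖ = Real.exp w.re from by rw [Complex.norm_exp]]
  rw [Real.exp_le_exp]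
  have h1 : |w.re| ≤ ‖w‖ := Complex.abs_re_le_norm w
  have h2 := neg_abs_le w.re
  linarith

theorem norm_fourPiI (ω : ℂ) : ‖4*(π:ℂ)*I*ω‖ = 4*π*‖ω‖ := by
  have hπ := Real.pi_pos
  rw [norm_mul, norm_mul, norm_mul]
  simp [Complex.norm_real, abs_of_pos hπ]

/-- main smallness estimate -/
theorem norm_w_lt {τ : ℂ} (hτ : 0 < τ.im) {ω : ℂ} (hω : ω ∈ ball (0:ℂ) τ.im)
    {w : ℂ} (hw : ‖w‖ ≤ 4*π*τ.im) {m : ℕ} (hm : 4 ≤ m) :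
    ‖Complex.exp w * nome τ ^ m‖ < 1 := by
  have hπ := Real.pi_pos
  have h1 : ‖Complex.exp w‖ ≤ Real.exp (4*π*τ.im) :=
    (norm_exp_le w).trans (Real.exp_le_exp.mpr hw)
  have h2 : ‖nome τ ^ m‖ ≤ Real.exp (-(2*π*τ.im))^4 := by
    rw [norm_pow, norm_nome]
    calc Real.exp (-(2*π*τ.im)) ^ m ≤ Real.exp (-(2*π*τ.im)) ^ 4 :=
          pow_le_pow_of_le_one (Real.exp_pos _).le
            (Real.exp_le_one_iff.mpr (by nlinarith)) hm
      _ = _ := rfl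
  calc ‖Complex.exp w * nome τ ^ m‖ = ‖Complex.exp w‖ * ‖nome τ ^ m‖ := norm_mul _ _
    _ ≤ Real.exp (4*π*τ.im) * Real.exp (-(2*π*τ.im))^4 := by
        gcongr
    _ < 1 := by
        rw [← Real.exp_nat_mul, ← Real.exp_add]
        rw [Real.exp_lt_one_iff]
        push_cast
        nlinarith

theorem norm_u_gt {τ : ℂ} (hτ : 0 < τ.im) {w : ℂ} (hw : ‖w‖ ≤ 4*π*τ.im) {m : ℕ}
    (hm : 4 ≤ m) : 1 < ‖Complex.exp w * (nome τ ^ m)⁻¹‖ := by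
  have hπ := Real.pi_pos
  have h1 : Real.exp (-(4*π*τ.im)) ≤ ‖Complex.exp w‖ :=
    le_trans (Real.exp_le_exp.mpr (by linarith)) (norm_exp_ge w)
  have h2 : ‖nome τ ^ m‖ ≤ Real.exp (-(2*π*τ.im))^4 := by
    rw [norm_pow, norm_nome]
    exact pow_le_pow_of_le_one (Real.exp_pos _).le
      (Real.exp_le_one_iff.mpr (by nlinarith)) hm
  have h2' : 0 < ‖nome τ ^ m‖ := norm_pos_iff.mpr (pow_ne_zero _ (nome_ne τ))
  rw [norm_mul, norm_inv]
  have h3 : ‖nome τ ^ m‖⁻¹ ≥ (Real.exp (-(2*π*τ.im))^4)⁻¹ := by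
    apply inv_anti₀ (by positivity) h2
  calc (1:ℝ) < Real.exp (-(4*π*τ.im)) * (Real.exp (-(2*π*τ.im))^4)⁻¹ := by
        rw [← Real.exp_nat_mul, ← Real.exp_neg, ← Real.exp_add]
        rw [show (1:ℝ) = Real.exp 0 from (Real.exp_zero).symm, Real.exp_lt_exp]
        push_cast
        nlinarith
    _ ≤ ‖Complex.exp w‖ * ‖nome τ ^ m‖⁻¹ := by
        apply mul_le_mul h1 h3 (by positivity) (norm_nonneg _)

theorem one_sub_ne_of_lt {x : ℂ} (h : ‖x‖ < 1) : 1 - x ≠ 0 := by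
  intro h0
  rw [sub_eq_zero] at h0
  rw [← h0] at h
  simp at h

theorem one_sub_ne_of_gt {x : ℂ} (h : 1 < ‖x‖) : 1 - x ≠ 0 := by
  intro h0
  rw [sub_eq_zero] at h0
  rw [← h0] at h
  simp at h

theorem hb4 {τ : ℂ} {ω : ℂ} (hω : ω ∈ ball (0:ℂ) τ.im) : ‖4*(π:ℂ)*I*ω‖ ≤ 4*π*τ.im := by
  have hπ := Real.pi_pos
  rw [norm_fourPiI]
  have := norm_le_of_ball hω
  nlinarith

theorem exp_cf_true (n k : ℕ) (ω : ℂ) :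
    Complex.exp (2*(π:ℂ)*I*ω) * (Complex.exp (4*(π:ℂ)*I*ω))^k =
      Complex.exp (cf (true,n,k) * ω) := by
  rw [← Complex.exp_nat_mul, ← Complex.exp_add]
  congr 1
  rw [cf, sg]
  simp only [if_true]
  push_cast
  ring

theorem exp_cf_false (n k : ℕ) (ω : ℂ) :
    (Complex.exp (2*(π:ℂ)*I*ω))⁻¹ * ((Complex.exp (4*(π:ℂ)*I*ω))⁻¹)^k =
      Complex.exp (cf (false,n,k) * ω) := by
  rw [← Complex.exp_neg, ← Complex.exp_neg, ← Complex.exp_nat_mul, ← Complex.exp_add]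
  congr 1
  rw [cf, sg]
  simp only [Bool.false_eq_true, if_false]
  push_cast
  ring

theorem q_pow_Eex (τ : ℂ) (n k : ℕ) :
    nome τ ^ (4*n^2+8*n+3) * (nome τ ^ (8*n+4))^k = nome τ ^ Eex n k := by
  rw [← pow_mul, ← pow_add]
  congr 1
  rw [Eex]
  ring

theorem hasSum_pos {τ : ℂ} (hτ : 0 < τ.im) {ω : ℂ} (hω : ω ∈ ball (0:ℂ) τ.im) (n : ℕ) :
    HasSum (fun k => g τ 0 (true, n, k) ω)
      ((-1:ℂ)^(n:ℤ) * Complex.exp (2*(π:ℂ)*I*ω) * nome τ ^ (4*(n:ℤ)^2+8*(n:ℤ)+3) /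
        (1 - Complex.exp (4*(π:ℂ)*I*ω) * nome τ ^ (8*(n:ℤ)+4))) := by
  have hwlt : ‖Complex.exp (4*(π:ℂ)*I*ω) * nome τ ^ (8*n+4)‖ < 1 :=
    norm_w_lt hτ hω (hb4 hω) (by omega)
  have hgeo := (hasSum_geometric_of_norm_lt_one hwlt).mul_left
      ((-1:ℂ)^n * Complex.exp (2*(π:ℂ)*I*ω) * nome τ ^ (4*n^2+8*n+3))
  have e1 : (4*(n:ℤ)^2+8*(n:ℤ)+3) = ((4*n^2+8*n+3 : ℕ) : ℤ) := by push_cast; ring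
  have e2 : (8*(n:ℤ)+4) = ((8*n+4 : ℕ) : ℤ) := by push_cast; ring
  rw [e1, e2, zpow_natCast, zpow_natCast, zpow_natCast, div_eq_mul_inv]
  have hfun : (fun k => ((-1:ℂ)^n * Complex.exp (2*(π:ℂ)*I*ω) * nome τ ^ (4*n^2+8*n+3)) *
      (Complex.exp (4*(π:ℂ)*I*ω) * nome τ ^ (8*n+4))^k) = fun k => g τ 0 (true, n, k) ω := by
    funext k
    rw [mul_pow, g]
    rw [show ((-1:ℂ)^n * Complex.exp (2*(π:ℂ)*I*ω) * nome τ ^ (4*n^2+8*n+3)) *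
      ((Complex.exp (4*(π:ℂ)*I*ω))^k * (nome τ ^ (8*n+4))^k) =
      ((-1:ℂ)^n * (nome τ ^ (4*n^2+8*n+3) * (nome τ ^ (8*n+4))^k)) *
      (Complex.exp (2*(π:ℂ)*I*ω) * (Complex.exp (4*(π:ℂ)*I*ω))^k) by ring]
    rw [exp_cf_true n, q_pow_Eex]
    simp only [pow_zero, mul_one]
  exact hfun ▸ hgeo


theorem hasSum_neg {τ : ℂ} (hτ : 0 < τ.im) {ω : ℂ} (hω : ω ∈ ball (0:ℂ) τ.im) (m : ℕ) :
    HasSum (fun k => g τ 0 (false, m, k) ω)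
      ((-1:ℂ)^(-((m:ℤ)+1)) * Complex.exp (2*(π:ℂ)*I*ω) *
          nome τ ^ (4*(-((m:ℤ)+1))^2+8*(-((m:ℤ)+1))+3) /
        (1 - Complex.exp (4*(π:ℂ)*I*ω) * nome τ ^ (8*(-((m:ℤ)+1))+4))) := by
  have hπ := Real.pi_pos
  set z := Complex.exp (2*(π:ℂ)*I*ω) with hz
  set Z := Complex.exp (4*(π:ℂ)*I*ω) with hZ
  set q := nome τ with hq
  have hqne : q ≠ 0 := nome_ne τ
  have hzne : z ≠ 0 := Complex.exp_ne_zero _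
  have hZne : Z ≠ 0 := Complex.exp_ne_zero _
  have hZz : Z = z^2 := by
    rw [hz, hZ, ← Complex.exp_nat_mul]
    congr 1
    push_cast
    ring
  set P := q ^ (4*m^2+8*m+3) with hP
  set Q := q ^ (8*m+4) with hQ
  have hQne : Q ≠ 0 := pow_ne_zero _ hqne
  -- rewrite the zpow expressions
  have e1 : q ^ (4*(-((m:ℤ)+1))^2+8*(-((m:ℤ)+1))+3) = P * Q⁻¹ := by
    rw [show (4*(-((m:ℤ)+1))^2+8*(-((m:ℤ)+1))+3) =
      ((4*m^2+8*m+3 : ℕ) : ℤ) + (-((8*m+4 : ℕ) : ℤ)) by push_cast; ring]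
    rw [zpow_add₀ hqne, zpow_natCast, zpow_neg, zpow_natCast]
  have e2 : q ^ (8*(-((m:ℤ)+1))+4) = Q⁻¹ := by
    rw [show (8*(-((m:ℤ)+1))+4) = (-((8*m+4 : ℕ) : ℤ)) by push_cast; ring]
    rw [zpow_neg, zpow_natCast]
  have e3 : (-1:ℂ)^(-((m:ℤ)+1)) = (-1:ℂ)^(m+1) := by
    rw [show (-((m:ℤ)+1)) = (-(((m+1 : ℕ)) : ℤ)) by push_cast; ring]
    rw [zpow_neg, zpow_natCast, ← inv_pow, inv_neg, inv_one]
  rw [e1, e2, e3]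
  -- nonvanishing of denominators
  have hZinv : Z⁻¹ = Complex.exp (-(4*(π:ℂ)*I*ω)) := by rw [hZ, ← Complex.exp_neg]
  have hvn : ‖(-(4*(π:ℂ)*I*ω))‖ ≤ 4*π*τ.im := by rw [norm_neg]; exact hb4 hω
  have hw'lt : ‖Z⁻¹ * Q‖ < 1 := by
    rw [hZinv, hQ]
    exact norm_w_lt hτ hω hvn (by omega)
  have hugt : 1 < ‖Z * Q⁻¹‖ := by
    rw [hQ]
    exact norm_u_gt hτ (hb4 hω) (by omega)
  have hd1 : 1 - Z * Q⁻¹ ≠ 0 := one_sub_ne_of_gt hugt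
  have hd2 : 1 - Z⁻¹ * Q ≠ 0 := one_sub_ne_of_lt hw'lt
  -- the value identity
  have hval : (-1:ℂ)^(m+1) * z * (P * Q⁻¹) / (1 - Z * Q⁻¹) =
      ((-1:ℂ)^m * z⁻¹ * P) * (1 - Z⁻¹ * Q)⁻¹ := by
    rw [← div_eq_mul_inv ((-1:ℂ)^m * z⁻¹ * P), div_eq_div_iff hd1 hd2]
    rw [pow_succ, hZz]
    field_simp
    ring
  rw [hval]
  have hgeo := (hasSum_geometric_of_norm_lt_one hw'lt).mul_left ((-1:ℂ)^m * z⁻¹ * P)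
  have hfun : (fun k => ((-1:ℂ)^m * z⁻¹ * P) * (Z⁻¹ * Q)^k) =
      fun k => g τ 0 (false, m, k) ω := by
    funext k
    rw [mul_pow, g]
    rw [show ((-1:ℂ)^m * z⁻¹ * P) * ((Z⁻¹)^k * Q^k) =
      ((-1:ℂ)^m * (P * Q^k)) * (z⁻¹ * (Z⁻¹)^k) by ring]
    rw [hP, hQ, q_pow_Eex, hz, hZ, exp_cf_false m]
    simp only [pow_zero, mul_one]
  exact hfun ▸ hgeo


theorem bilat_eq_G {τ : ℂ} (hτ : 0 < τ.im) {ω : ℂ} (hω : ω ∈ ball (0:ℂ) τ.im) :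
    bilat τ ω = G τ 0 ω := by
  have hsum := g_summable hτ 0 hω
  have Htot : HasSum (fun j => g τ 0 j ω) (G τ 0 ω) := hsum.hasSum
  have hfib : ∀ s : Bool, HasSum (fun p : ℕ × ℕ => g τ 0 (s, p) ω)
      (∑' p : ℕ × ℕ, g τ 0 (s, p) ω) := by
    intro s
    have h2 : Summable (fun p : ℕ × ℕ => g τ 0 (s, p) ω) := by
      apply hsum.comp_injective (i := fun p : ℕ × ℕ => ((s, p) : Bool × ℕ × ℕ))
      intro a b hab
      simpa using hab
    exact h2.hasSum
  have hP : HasSum (fun s : Bool => ∑' p : ℕ × ℕ, g τ 0 (s, p) ω) (G τ 0 ω) :=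
    Htot.prod_fiberwise hfib
  have hGval : G τ 0 ω =
      (∑' p : ℕ × ℕ, g τ 0 (false, p) ω) + ∑' p : ℕ × ℕ, g τ 0 (true, p) ω := by
    rw [← hP.tsum_eq, tsum_bool]
  have hfib2 : ∀ (s : Bool) (n : ℕ), HasSum (fun k => g τ 0 (s, n, k) ω)
      (∑' k, g τ 0 (s, n, k) ω) := by
    intro s n
    have h2 : Summable (fun k : ℕ => g τ 0 (s, n, k) ω) := by
      apply hsum.comp_injective (i := fun k : ℕ => ((s, n, k) : Bool × ℕ × ℕ))
      intro a b hab
      simpa using hab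
    exact h2.hasSum
  set f : ℤ → ℂ := fun n => (-1:ℂ)^n * Complex.exp (2*(π:ℂ)*I*ω) *
      nome τ ^ (4*n^2+8*n+3 : ℤ) /
    (1 - Complex.exp (4*(π:ℂ)*I*ω) * nome τ ^ (8*n+4 : ℤ)) with hf
  have htrue : HasSum (fun n : ℕ => f (n : ℤ)) (∑' p : ℕ × ℕ, g τ 0 (true, p) ω) := by
    have h1 := (hfib true).prod_fiberwise (hfib2 true)
    have h2 : (fun n : ℕ => ∑' k, g τ 0 (true, n, k) ω) = fun n : ℕ => f (n : ℤ) := by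
      funext n
      exact (hasSum_pos hτ hω n).tsum_eq
    exact h2 ▸ h1
  have hfalse : HasSum (fun n : ℕ => f (-((n:ℤ) + 1)))
      (∑' p : ℕ × ℕ, g τ 0 (false, p) ω) := by
    have h1 := (hfib false).prod_fiberwise (hfib2 false)
    have h2 : (fun n : ℕ => ∑' k, g τ 0 (false, n, k) ω) = fun n : ℕ => f (-((n:ℤ)+1)) := by
      funext n
      exact (hasSum_neg hτ hω n).tsum_eq
    exact h2 ▸ h1
  have hfinal : HasSum f ((∑' p : ℕ × ℕ, g τ 0 (true, p) ω) +
      ∑' p : ℕ × ℕ, g τ 0 (false, p) ω) := htrue.of_nat_of_neg_add_one hfalse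
  have hb : bilat τ ω = ∑' n, f n := by rw [bilat]
  rw [hb, hfinal.tsum_eq, hGval, add_comm]


end Aux

open Aux in
/-- For even `t ≥ 0` and `τ ∈ ℍ`:
`ℱ_t(q) = −½ D_ω^t [ Σ_{n∈ℤ} (−1)ⁿ e^{2πiω} q^{4n²+8n+3}/(1−e^{4πiω}q^{8n+4}) ]|_{ω=0}`,
the series being holomorphic in `ω` near `0`, where `D_ω = (2πi)⁻¹ d/dω`. -/
theorem stmt2 (t : ℕ) (ht : Even t) (τ : ℂ) (hτ : 0 < τ.im) :
    AnalyticAt ℂ (bilat τ) 0 ∧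
    Fser t (nome τ) =
      -(1 / 2) * ((1 / (2 * (π : ℂ) * I)) ^ t * iteratedDeriv t (bilat τ) 0) := by
  have hπ := Real.pi_pos
  have h2πI : (2*(π:ℂ)*I) ≠ 0 := by
    simp [Complex.ofReal_ne_zero, Real.pi_ne_zero, Complex.I_ne_zero]
  have hEq : bilat τ =ᶠ[nhds (0:ℂ)] G τ 0 :=
    Filter.eventuallyEq_of_mem (isOpen_ball.mem_nhds (mem_ball_self hτ))
      (fun z hz => bilat_eq_G hτ hz)
  constructor
  · exact (G_analyticAt hτ).congr hEq.symm
  · have hid : iteratedDeriv t (bilat τ) 0 = G τ t 0 := by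
      rw [(eventuallyEq_iteratedDeriv hEq t).eq_of_nhds]
      exact iteratedDeriv_G hτ t (mem_ball_self hτ)
    rw [hid]
    -- compute G τ t 0
    set q := nome τ with hq
    set c0 : ℂ := (1 / (2 * (π:ℂ) * I)) ^ t with hc0
    set A : ℕ × ℕ → ℂ := fun p =>
      (-1)^p.1 * q ^ Eex p.1 p.2 * ((2*(π:ℂ)*I) * (2*(p.2:ℂ)+1))^t with hA
    have hterm : ∀ j : Bool × ℕ × ℕ, g τ t j 0 = A j.2 := by
      rintro ⟨s, n, k⟩
      rw [g]
      simp only [mul_zero, Complex.exp_zero, mul_one]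
      rw [cf, mul_assoc (sg s), mul_pow]
      have hsg : sg s ^ t = 1 := by
        cases s
        · rw [sg]; simp only [Bool.false_eq_true, if_false]; exact ht.neg_one_pow
        · rw [sg]; simp
      rw [hsg, one_mul, hA]
    have hsum0 := (g_summable hτ t (mem_ball_self hτ)).congr hterm
    have hGv : G τ t 0 = ∑' j : Bool × ℕ × ℕ, A j.2 := by
      rw [G]
      exact tsum_congr hterm
    have hAsum : Summable A := by
      apply hsum0.comp_injective (i := fun p : ℕ × ℕ => ((true, p) : Bool × ℕ × ℕ))
      intro a b hab
      simpa using hab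
    set S := ∑' p : ℕ × ℕ, A p with hS
    have hGv2 : G τ t 0 = S + S := by
      rw [hGv, hsum0.tsum_prod, tsum_bool]
    -- swap coordinates
    set B : ℕ × ℕ → ℂ := fun p => A (p.2, p.1) with hB
    have hBsum : Summable B := by
      have := hAsum.comp_injective (i := fun p : ℕ × ℕ => ((p.2, p.1) : ℕ × ℕ))
        (fun a b hab => by
          simp only [Prod.mk.injEq] at hab
          exact Prod.ext hab.2 hab.1)
      exact this
    have hSB : S = ∑' p : ℕ × ℕ, B p := by
      rw [hS]
      exact ((Equiv.prodComm ℕ ℕ).tsum_eq A).symm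
    have hSiter : S = ∑' (k : ℕ) (n : ℕ), A (n, k) := by
      rw [hSB, hBsum.tsum_prod]
    -- termwise identification with Fser
    have hkey : ∀ k n : ℕ, (-1 : ℂ) ^ (k + 1 + n + k) * (2 * (k : ℂ) + 1) ^ t *
        q ^ (4 * (k + 1 + n) ^ 2 - (2 * k + 1) ^ 2) = -(c0 * A (n, k)) := by
      intro k n
      have hexp : 4 * (k + 1 + n) ^ 2 - (2 * k + 1) ^ 2 = Eex n k := by
        have h1 : 4 * (k + 1 + n) ^ 2 = Eex n k + (2 * k + 1) ^ 2 := by rw [Eex]; ring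
        rw [h1, Nat.add_sub_cancel]
      have hsgn : (-1 : ℂ) ^ (k + 1 + n + k) = (-1)^n * (-1) := by
        rw [show k + 1 + n + k = 2*k + n + 1 by ring, pow_add, pow_add, pow_mul,
          neg_one_sq, one_pow, pow_one, one_mul]
      have hpow : c0 * ((2*(π:ℂ)*I) * (2*(k:ℂ)+1))^t = (2*(k:ℂ)+1)^t := by
        rw [hc0, ← mul_pow, ← mul_assoc, one_div, inv_mul_cancel₀ h2πI, one_mul]
      rw [hexp, hsgn, hA]
      simp only
      rw [show -(c0 * ((-1:ℂ)^n * q ^ Eex n k * ((2*(π:ℂ)*I) * (2*(k:ℂ)+1))^t)) =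
        ((-1:ℂ)^n * q ^ Eex n k) * -(c0 * ((2*(π:ℂ)*I) * (2*(k:ℂ)+1))^t) by ring, hpow]
      ring
    have hFser : Fser t q = ∑' (k : ℕ) (n : ℕ), -(c0 * A (n, k)) := by
      rw [Fser]
      congr 1
      funext k
      congr 1
      funext n
      exact hkey k n
    rw [hFser, hGv2]
    have hpush : ∑' (k : ℕ) (n : ℕ), -(c0 * A (n, k)) = -(c0 * S) := by
      rw [hSiter]
      have hinner : ∀ k : ℕ, ∑' n : ℕ, -(c0 * A (n, k)) = -(c0 * ∑' n : ℕ, A (n, k)) := by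
        intro k
        rw [tsum_neg, tsum_mul_left]
      calc ∑' (k : ℕ) (n : ℕ), -(c0 * A (n, k))
          = ∑' k : ℕ, -(c0 * ∑' n : ℕ, A (n, k)) := tsum_congr hinner
        _ = -(c0 * ∑' (k : ℕ) (n : ℕ), A (n, k)) := by rw [tsum_neg, tsum_mul_left]
    rw [hpush]
    ring
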